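/- arXiv:1605.07806 — 7 statements merged into one kernel-verified Lean document; each statement's English description precedes it below -/
import Mathlib

section
/- Let G be a group acting transitively on a finite set α. For each pair of distinct elements x, y of α, let Γ_{x,y} be the simple graph on vertex set α in which two distinct vertices a and b are adjacent if and only if the pair (a,b) or the pair (b,a) lies in the G-orbit of (x,y) under the diagonal action of G on α × α. Then the action of G on α is primitive (i.e., preprimitive: transitive with only trivial blocks) if and only if for every pair of distinct elements x ≠ y of α the graph Γ_{x,y} is connected. (Higman's Theorem.) -/
open Pointwise


/-- A multiplicative action is *preprimitive* (primitive) if it is pretransitive and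
its only blocks are trivial (subsingletons or the whole set). -/
def IsPreprimitive (G α : Type*) [Group G] [MulAction G α] : Prop :=
  MulAction.IsPretransitive G α ∧
    ∀ B : Set α, MulAction.IsBlock G B → MulAction.IsTrivialBlock B

section Aux

variable {G : Type*} [Group G] {α : Type*} [MulAction G α]

/-- The orbital graph. -/
private abbrev orbGraph (x y : α) : SimpleGraph α :=
  SimpleGraph.fromRel fun a b => (a, b) ∈ MulAction.orbit G ((x, y) : α × α)

private lemma orbGraph_adj_smul {x y : α} (g : G) {a b : α}
    (h : (orbGraph (G := G) x y).Adj a b) :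
    (orbGraph (G := G) x y).Adj (g • a) (g • b) := by
  obtain ⟨hne, h⟩ := h
  refine ⟨fun he => hne (smul_left_cancel g he), ?_⟩
  rcases h with ⟨k, hk⟩ | ⟨k, hk⟩
  · exact Or.inl ⟨g * k, by simp [mul_smul, hk, Prod.smul_def]⟩
  · exact Or.inr ⟨g * k, by simp [mul_smul, hk, Prod.smul_def]⟩

private lemma orbGraph_reachable_smul {x y : α} (g : G) {a b : α}
    (h : (orbGraph (G := G) x y).Reachable a b) :
    (orbGraph (G := G) x y).Reachable (g • a) (g • b) := by
  obtain ⟨w⟩ := h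
  induction w with
  | nil => exact SimpleGraph.Reachable.refl _
  | cons hadj _ ih => exact (SimpleGraph.Adj.reachable (orbGraph_adj_smul g hadj)).trans ih

end Aux

/-- **Higman's Theorem.** A transitive action of a group `G` on a finite set `α` is
primitive if and only if, for every pair of distinct points `x ≠ y`, the orbital graph
`Γ_{x,y}` (vertices `α`, with `a ∼ b` iff `a ≠ b` and `(a,b)` or `(b,a)` lies in the
`G`-orbit of `(x,y)` in `α × α`) is connected. -/
theorem higman_primitive_iff_orbital_graphs_connected
    {G : Type*} [Group G] {α : Type*} [Finite α] [MulAction G α]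
    (htrans : MulAction.IsPretransitive G α) :
    IsPreprimitive G α ↔
      ∀ x y : α, x ≠ y →
        (SimpleGraph.fromRel fun a b => (a, b) ∈ MulAction.orbit G ((x, y) : α × α)).Connected := by
  classical
  constructor
  · rintro ⟨-, hblocks⟩ x y hxy
    set Γ := orbGraph (G := G) x y with hΓ
    set B : Set α := {z | Γ.Reachable x z} with hBdef
    have hB : MulAction.IsBlock G B := by
      rw [MulAction.isBlock_iff_smul_eq_of_nonempty]
      intro g ⟨w, hw1, hw2⟩
      obtain ⟨z, hz, rfl⟩ := hw1
      -- hz : Reachable x z, hw2 : Reachable x (g • z)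
      have hgx : Γ.Reachable x (g • x) := by
        exact hw2.trans (orbGraph_reachable_smul g hz).symm
      ext w
      constructor
      · rintro ⟨u, hu, rfl⟩
        exact hgx.trans (orbGraph_reachable_smul g hu)
      · intro hw
        refine ⟨g⁻¹ • w, ?_, by simp⟩
        have h1 : Γ.Reachable (g⁻¹ • x) (g⁻¹ • w) := orbGraph_reachable_smul g⁻¹ hw
        have h2 : Γ.Reachable (g⁻¹ • x) x := by
          have := orbGraph_reachable_smul g⁻¹ hgx
          simpa using this
        exact (h2.symm.trans h1 : Γ.Reachable x (g⁻¹ • w))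
    rcases hblocks B hB with hsub | huniv
    · exfalso
      have hxB : x ∈ B := SimpleGraph.Reachable.refl x
      have hyB : y ∈ B := SimpleGraph.Adj.reachable ⟨hxy, Or.inl (MulAction.mem_orbit_self _)⟩
      exact hxy (hsub hxB hyB)
    · have : Nonempty α := ⟨x⟩
      refine ⟨fun u v => ?_⟩
      have hu : u ∈ B := huniv ▸ Set.mem_univ u
      have hv : v ∈ B := huniv ▸ Set.mem_univ v
      exact (hu : Γ.Reachable x u).symm.trans hv
  · intro hconn
    refine ⟨htrans, fun B hB => ?_⟩
    by_contra hnot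
    rw [MulAction.IsTrivialBlock, not_or] at hnot
    obtain ⟨hns, hnu⟩ := hnot
    rw [Set.not_subsingleton_iff] at hns
    obtain ⟨x, hxB, y, hyB, hxy⟩ := hns
    obtain ⟨z, hz⟩ : ∃ z, z ∉ B := by
      by_contra h
      push_neg at h
      exact hnu (Set.eq_univ_of_forall h)
    set Γ := orbGraph (G := G) x y with hΓ
    have hadjB : ∀ a b : α, Γ.Adj a b → a ∈ B → b ∈ B := by
      rintro a b ⟨hne, hor⟩ haB
      rcases hor with ⟨g, hg⟩ | ⟨g, hg⟩
      · -- g • (x,y) = (a,b)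
        have hgx : g • x = a := congrArg Prod.fst hg
        have hgy : g • y = b := congrArg Prod.snd hg
        have : g • B = B := hB.smul_eq_of_mem hxB (hgx ▸ haB)
        rw [← this]
        exact ⟨y, hyB, hgy⟩
      · have hgx : g • x = b := congrArg Prod.fst hg
        have hgy : g • y = a := congrArg Prod.snd hg
        have : g • B = B := hB.smul_eq_of_mem hyB (hgy ▸ haB)
        rw [← this]
        exact ⟨x, hxB, hgx⟩
    obtain ⟨w⟩ := (hconn x y hxy).preconnected x z
    have : ∀ {a b : α} (_ : Γ.Walk a b), a ∈ B → b ∈ B := by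
      intro a b w
      induction w with
      | nil => exact id
      | cons hadj _ ih => exact fun ha => ih (hadjB _ _ hadj ha)
    exact hz (this w hxB)
end

section
/- The polynomial p = X⁴ − 4X² + t is irreducible over the field K = ℂ(t) of rational functions in one variable over the complex numbers. -/
open Polynomial

noncomputable section

/-- The "swap variables" ring hom on `ℂ[X][X]`. -/
def swapHom : (Polynomial ℂ)[X] →+* (Polynomial ℂ)[X] :=
  eval₂RingHom (eval₂RingHom (C.comp C) X) (C X)

lemma swapHom_comp_swapHom : swapHom.comp swapHom = RingHom.id _ := by
  apply Polynomial.ringHom_ext' <;>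
    [apply Polynomial.ringHom_ext' <;>
      [ext a; skip]; skip] <;>
    simp [swapHom, coeff_C]

/-- Swap as a ring equivalence. -/
def swapEquiv : (Polynomial ℂ)[X] ≃+* (Polynomial ℂ)[X] :=
  RingEquiv.ofRingHom swapHom swapHom swapHom_comp_swapHom swapHom_comp_swapHom

lemma irreducible_aux :
    Irreducible (X ^ 4 - C 4 * X ^ 2 + C Polynomial.X : (Polynomial ℂ)[X]) := by
  have key : swapEquiv (X + C (Polynomial.X ^ 4 - 4 * Polynomial.X ^ 2) : (Polynomial ℂ)[X])
      = X ^ 4 - C 4 * X ^ 2 + C Polynomial.X := by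
    simp only [swapEquiv, RingEquiv.ofRingHom_apply, swapHom, map_add, map_sub, map_mul, map_pow,
      map_ofNat, coe_eval₂RingHom, eval₂_C, eval₂_X, eval₂_add, eval₂_sub, eval₂_mul, eval₂_pow, eval₂_ofNat]
    ring
  rw [← key]
  have h1 : Irreducible (X + C (Polynomial.X ^ 4 - 4 * Polynomial.X ^ 2) : (Polynomial ℂ)[X]) := by
    apply Monic.irreducible_of_degree_eq_one
    · exact degree_X_add_C _
    · exact monic_X_add_C _
  exact h1.map swapEquiv.toMulEquiv

/-- The polynomial `X⁴ - 4X² + t` is irreducible over the field `ℂ(t)` of rational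
functions over the complex numbers. -/
theorem X_pow_four_sub_four_X_sq_add_t_irreducible :
    Irreducible
      (X ^ 4 - C 4 * X ^ 2 + C (RatFunc.X : RatFunc ℂ) : (RatFunc ℂ)[X]) := by
  have hmonic : (X ^ 4 - C 4 * X ^ 2 + C Polynomial.X : (Polynomial ℂ)[X]).Monic := by
    have : (X ^ 4 - C 4 * X ^ 2 + C Polynomial.X : (Polynomial ℂ)[X])
        = X ^ 4 + (C Polynomial.X - C 4 * X ^ 2) := by ring
    rw [this]
    apply monic_X_pow_add
    apply lt_of_le_of_lt (degree_sub_le _ _)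
    simp only [max_lt_iff]
    refine ⟨lt_of_le_of_lt degree_C_le (by norm_num), ?_⟩
    apply lt_of_le_of_lt (degree_mul_le _ _)
    have h2 : (C (4 : ℂ[X])).degree + (X ^ 2 : (ℂ[X])[X]).degree ≤ 0 + 2 :=
      add_le_add degree_C_le (degree_X_pow_le 2)
    exact lt_of_le_of_lt h2 (by norm_num)
  have h := (hmonic.irreducible_iff_irreducible_map_fraction_map (K := RatFunc ℂ)).mp
    irreducible_aux
  have hmap : (X ^ 4 - C 4 * X ^ 2 + C Polynomial.X : (Polynomial ℂ)[X]).map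
      (algebraMap (Polynomial ℂ) (RatFunc ℂ))
      = (X ^ 4 - C 4 * X ^ 2 + C (RatFunc.X : RatFunc ℂ) : (RatFunc ℂ)[X]) := by
    simp [Polynomial.map_add, Polynomial.map_sub, Polynomial.map_mul, Polynomial.map_pow,
      Polynomial.map_ofNat, RatFunc.algebraMap_X, map_ofNat]
  rwa [hmap] at h

end
end

section
/- Let L be the splitting field of the polynomial p = X⁴ − 4X² + t over the field K = ℂ(t) of rational functions. Then the Galois group of L over K (the group of K-algebra automorphisms of L) has exactly 8 elements. -/
open Polynomial
set_option maxHeartbeats 1000000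
set_option synthInstance.maxHeartbeats 1000000

noncomputable section QuarticGaloisAux

/-- A subfield of `RatFunc ℂ` containing all constants and `X` is everything. -/
lemma ratfunc_mem_subfield (S : Subfield (RatFunc ℂ)) (hC : ∀ c : ℂ, RatFunc.C c ∈ S)
    (hX : RatFunc.X ∈ S) (r : RatFunc ℂ) : r ∈ S := by
  have hpoly : ∀ q : ℂ[X], algebraMap ℂ[X] (RatFunc ℂ) q ∈ S := by
    intro q
    induction q using Polynomial.induction_on' with
    | add p q hp hq => rw [map_add]; exact S.add_mem hp hq
    | monomial n a =>
      rw [← Polynomial.C_mul_X_pow_eq_monomial, map_mul, map_pow]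
      exact S.mul_mem (by simpa [RatFunc.algebraMap_C] using hC a)
        (S.pow_mem (by simpa [RatFunc.algebraMap_X] using hX) n)
  rw [← RatFunc.num_div_denom r]
  exact S.div_mem (hpoly _) (hpoly _)

lemma not_isSquare_of_odd_rootMultiplicity (q : ℂ[X]) (hq : q ≠ 0) (a : ℂ)
    (h : Odd (q.rootMultiplicity a)) :
    ¬ IsSquare (algebraMap ℂ[X] (RatFunc ℂ) q) := by
  rintro ⟨u, hu⟩
  have hu0 : u ≠ 0 := by
    rintro rfl
    rw [mul_zero] at hu
    exact hq (by simpa using (map_eq_zero_iff _ (RatFunc.algebraMap_injective ℂ)).mp hu)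
  have hd : u.denom ≠ 0 := u.denom_ne_zero
  have hn : u.num ≠ 0 := RatFunc.num_ne_zero hu0
  have key : q * u.denom ^ 2 = u.num ^ 2 := by
    apply RatFunc.algebraMap_injective ℂ
    rw [map_mul, map_pow, map_pow]
    have hden : algebraMap ℂ[X] (RatFunc ℂ) u.denom ≠ 0 := by
      simpa using (map_ne_zero_iff _ (RatFunc.algebraMap_injective ℂ)).mpr hd
    have h0 := RatFunc.num_div_denom u
    rw [div_eq_iff hden] at h0
    rw [h0, hu]
    ring
  have h1 : rootMultiplicity a (q * u.denom ^ 2)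
      = rootMultiplicity a q + 2 * rootMultiplicity a u.denom := by
    rw [sq, ← mul_assoc, Polynomial.rootMultiplicity_mul (by simp [hq, hd]),
      Polynomial.rootMultiplicity_mul (by simp [hq, hd])]
    ring
  have h2 : rootMultiplicity a (u.num ^ 2) = 2 * rootMultiplicity a u.num := by
    rw [sq, Polynomial.rootMultiplicity_mul (by simp [hn])]; ring
  rw [key, h2] at h1
  obtain ⟨k, hk⟩ := h
  omega

/-- Nonzero polynomials evaluated (via `aeval`) at the image of a nonconstant polynomial
in `RatFunc ℂ` are nonzero: i.e. such images are transcendental over `ℂ`. -/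
lemma aeval_polyImage_ne_zero (P : ℂ[X]) (hP : P.natDegree ≠ 0) {q : ℂ[X]} (hq : q ≠ 0) :
    aeval (algebraMap ℂ[X] (RatFunc ℂ) P) q ≠ 0 := by
  have h1 : aeval (algebraMap ℂ[X] (RatFunc ℂ) P) q
      = algebraMap ℂ[X] (RatFunc ℂ) (q.comp P) := by
    rw [comp_eq_aeval]
    exact aeval_algHom_apply (IsScalarTower.toAlgHom ℂ ℂ[X] (RatFunc ℂ)) P q
  rw [h1, map_ne_zero_iff _ (RatFunc.algebraMap_injective ℂ)]
  rw [Ne, comp_eq_zero_iff]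
  push_neg
  refine ⟨hq, fun _ => ?_⟩
  intro hPC
  exact hP (by rw [hPC]; simp)

/-- Lift `ℂ[X] → F`, `X ↦ w`, to `RatFunc ℂ → F` when `w` is transcendental. -/
def ratLift {F : Type*} [Field F] [Algebra ℂ F] (w : F)
    (hw : ∀ q : ℂ[X], q ≠ 0 → aeval w q ≠ 0) : RatFunc ℂ →ₐ[ℂ] F :=
  RatFunc.liftAlgHom (Polynomial.aeval w) (fun q hq =>
    mem_nonZeroDivisors_of_ne_zero (hw q (nonZeroDivisors.ne_zero hq)))

lemma ratLift_algebraMap {F : Type*} [Field F] [Algebra ℂ F] (w : F)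
    (hw : ∀ q : ℂ[X], q ≠ 0 → aeval w q ≠ 0) (p : ℂ[X]) :
    ratLift w hw (algebraMap ℂ[X] (RatFunc ℂ) p) = aeval w p := by
  simpa [ratLift] using RatFunc.liftAlgHom_apply_div (φ := Polynomial.aeval w)
    (hφ := fun q hq => mem_nonZeroDivisors_of_ne_zero (hw q (nonZeroDivisors.ne_zero hq))) p 1

lemma ratLift_X {F : Type*} [Field F] [Algebra ℂ F] (w : F)
    (hw : ∀ q : ℂ[X], q ≠ 0 → aeval w q ≠ 0) : ratLift w hw RatFunc.X = w := by
  rw [← RatFunc.algebraMap_X, ratLift_algebraMap, aeval_X]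

lemma ratLift_C {F : Type*} [Field F] [Algebra ℂ F] (w : F)
    (hw : ∀ q : ℂ[X], q ≠ 0 → aeval w q ≠ 0) (c : ℂ) :
    ratLift w hw (RatFunc.C c) = algebraMap ℂ F c := by
  rw [← RatFunc.algebraMap_C, ratLift_algebraMap, aeval_C]

/-- Two ring homs out of `RatFunc ℂ` agreeing on constants and `X` agree. -/
lemma ratfunc_hom_ext {F : Type*} [Field F] (f g : RatFunc ℂ →+* F)
    (hC : ∀ c : ℂ, f (RatFunc.C c) = g (RatFunc.C c)) (hX : f RatFunc.X = g RatFunc.X) :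
    f = g := by
  ext r
  have hpoly : ∀ q : ℂ[X], f (algebraMap ℂ[X] (RatFunc ℂ) q) = g (algebraMap ℂ[X] (RatFunc ℂ) q) := by
    intro q
    induction q using Polynomial.induction_on' with
    | add p q hp hq => rw [map_add, map_add, hp, hq, map_add]
    | monomial n a =>
      rw [← Polynomial.C_mul_X_pow_eq_monomial, map_mul, map_mul, map_pow, map_pow,
        RatFunc.algebraMap_C, RatFunc.algebraMap_X, hC, hX, map_mul, map_pow]
  rw [← RatFunc.num_div_denom r, map_div₀, map_div₀, hpoly, hpoly]

/-- A copy of `RatFunc ℂ`, to carry the `ℂ(t)`-algebra structure `t ↦ 4X² - X⁴`. -/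
def Mf : Type := RatFunc ℂ

instance : Field Mf := inferInstanceAs (Field (RatFunc ℂ))
instance : Algebra ℂ Mf := inferInstanceAs (Algebra ℂ (RatFunc ℂ))

/-- The generator `x` of `Mf`. -/
def xM : Mf := RatFunc.X

instance : CharZero (RatFunc ℂ) :=
  charZero_of_injective_algebraMap (algebraMap ℂ (RatFunc ℂ)).injective

instance : CharZero Mf := inferInstanceAs (CharZero (RatFunc ℂ))

lemma w_transcend : ∀ q : ℂ[X], q ≠ 0 →
    aeval ((4 : RatFunc ℂ) * RatFunc.X ^ 2 - RatFunc.X ^ 4) q ≠ 0 := by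
  intro q hq
  have h4 : (4 : RatFunc ℂ) * RatFunc.X ^ 2 - RatFunc.X ^ 4
      = algebraMap ℂ[X] (RatFunc ℂ) (4 * X ^ 2 - X ^ 4) := by
    simp [map_sub, map_mul, map_pow, RatFunc.algebraMap_X, map_ofNat]
  rw [h4]
  refine aeval_polyImage_ne_zero _ ?_ hq
  have : (4 * X ^ 2 - X ^ 4 : ℂ[X]).natDegree = 4 := by compute_degree!
  omega

lemma xM_transcend : ∀ q : ℂ[X], q ≠ 0 → aeval ((4 : Mf) * xM ^ 2 - xM ^ 4) q ≠ 0 :=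
  fun q hq => w_transcend q hq

/-- The algebra structure `ℂ(t) → Mf`, `t ↦ 4x² - x⁴`. -/
instance algKMf : Algebra (RatFunc ℂ) Mf :=
  (ratLift ((4 : Mf) * xM ^ 2 - xM ^ 4) xM_transcend).toRingHom.toAlgebra

lemma algebraMap_KMf_X :
    algebraMap (RatFunc ℂ) Mf RatFunc.X = 4 * xM ^ 2 - xM ^ 4 :=
  ratLift_X _ xM_transcend

lemma algebraMap_KMf_C (c : ℂ) :
    algebraMap (RatFunc ℂ) Mf (RatFunc.C c) = algebraMap ℂ Mf c :=
  ratLift_C _ xM_transcend c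

lemma neg_w_transcend : ∀ q : ℂ[X], q ≠ 0 → aeval (-RatFunc.X : RatFunc ℂ) q ≠ 0 := by
  intro q hq
  have h4 : (-RatFunc.X : RatFunc ℂ) = algebraMap ℂ[X] (RatFunc ℂ) (-X) := by
    simp [RatFunc.algebraMap_X]
  rw [h4]
  refine aeval_polyImage_ne_zero _ ?_ hq
  simp

lemma neg_xM_transcend : ∀ q : ℂ[X], q ≠ 0 → aeval (-xM) q ≠ 0 :=
  fun q hq => neg_w_transcend q hq

/-- The involution `x ↦ -x` of `Mf` over `ℂ`. -/
def sigmaM : Mf →ₐ[ℂ] Mf := ratLift (-xM) neg_xM_transcend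

lemma sigmaM_xM : sigmaM xM = -xM := ratLift_X _ _

lemma sigmaM_algebraMap (c : RatFunc ℂ) :
    sigmaM (algebraMap (RatFunc ℂ) Mf c) = algebraMap (RatFunc ℂ) Mf c := by
  have := ratfunc_hom_ext (sigmaM.toRingHom.comp (algebraMap (RatFunc ℂ) Mf))
    (algebraMap (RatFunc ℂ) Mf) ?_ ?_
  · exact congrFun (congrArg DFunLike.coe this) c
  · intro c
    simp only [RingHom.coe_comp, Function.comp_apply, algebraMap_KMf_C]
    exact sigmaM.commutes c
  · simp only [AlgHom.toRingHom_eq_coe, RingHom.coe_comp, RingHom.coe_coe,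
      Function.comp_apply, algebraMap_KMf_X]
    rw [map_sub, map_mul, map_pow, map_pow, sigmaM_xM, map_ofNat]
    ring

/-- The fixed field of `sigmaM` as an intermediate field of `Mf / ℂ(t)`. -/
def fixedIF : IntermediateField (RatFunc ℂ) Mf where
  carrier := {a : Mf | sigmaM a = a}
  mul_mem' := by intro a b (ha : _ = _) (hb : _ = _); show _ = _; rw [map_mul, ha, hb]
  one_mem' := map_one _
  add_mem' := by intro a b (ha : _ = _) (hb : _ = _); show _ = _; rw [map_add, ha, hb]
  zero_mem' := map_zero _
  algebraMap_mem' := sigmaM_algebraMap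
  inv_mem' := by intro a (ha : _ = _); show _ = _; rw [map_inv₀, ha]

lemma mem_fixedIF {a : Mf} : a ∈ fixedIF ↔ sigmaM a = a := Iff.rfl

lemma xM_not_mem_fixedIF : xM ∉ fixedIF := by
  intro h
  have h1 : sigmaM xM = xM := mem_fixedIF.mp h
  rw [sigmaM_xM] at h1
  have : (2 : Mf) * xM = 0 := by linear_combination -h1
  rcases mul_eq_zero.mp this with h2 | h2
  · exact two_ne_zero h2
  · exact RatFunc.X_ne_zero h2

/-- The intermediate field `ℂ(t)(x²)`. -/
def Emid : IntermediateField (RatFunc ℂ) Mf := IntermediateField.adjoin (RatFunc ℂ) {xM ^ 2}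

lemma Emid_le_fixedIF : Emid ≤ fixedIF := by
  rw [Emid, IntermediateField.adjoin_le_iff]
  rintro a rfl
  rw [SetLike.mem_coe, mem_fixedIF, map_pow, sigmaM_xM]
  ring

lemma xM_not_mem_Emid : xM ∉ Emid := fun h => xM_not_mem_fixedIF (Emid_le_fixedIF h)

lemma not_sq_discrim (z : RatFunc ℂ) : discrim 1 4 RatFunc.X ≠ z ^ 2 := by
  intro hz
  have h1 : discrim 1 4 (RatFunc.X : RatFunc ℂ)
      = algebraMap ℂ[X] (RatFunc ℂ) (Polynomial.C (-4) * (X - Polynomial.C 4)) := by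
    rw [discrim]
    simp [map_mul, map_sub, RatFunc.algebraMap_X, RatFunc.algebraMap_C, map_ofNat]
    ring
  have hXC : (X - Polynomial.C 4 : ℂ[X]) ≠ 0 := X_sub_C_ne_zero 4
  have hprod : (Polynomial.C (-4) * (X - Polynomial.C 4) : ℂ[X]) ≠ 0 :=
    mul_ne_zero (by simp) hXC
  have h2 : ¬ IsSquare (algebraMap ℂ[X] (RatFunc ℂ) (Polynomial.C (-4) * (X - Polynomial.C 4))) := by
    apply not_isSquare_of_odd_rootMultiplicity _ hprod 4
    rw [Polynomial.rootMultiplicity_mul hprod,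
      Polynomial.rootMultiplicity_eq_zero (by simp [Polynomial.IsRoot]),
      Polynomial.rootMultiplicity_X_sub_C_self]
    exact odd_one
  exact h2 ⟨z, by rw [← h1, hz]; ring⟩

/-- The quadratic `Y² - 4Y + t` over `ℂ(t)`. -/
def gq : (RatFunc ℂ)[X] := X ^ 2 - C 4 * X + C RatFunc.X

lemma gq_monic : gq.Monic := by unfold gq; monicity!

lemma gq_natDegree : gq.natDegree = 2 := by unfold gq; compute_degree!

lemma gq_coeff_zero : gq.coeff 0 = RatFunc.X := by
  unfold gq
  simp [coeff_X_pow]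

lemma gq_coeff_one : gq.coeff 1 = -4 := by
  unfold gq
  simp [coeff_X_pow]

lemma gq_irreducible : Irreducible gq := by
  by_contra h
  obtain ⟨c, d, hcd, hsum⟩ :=
    (gq_monic.not_irreducible_iff_exists_add_mul_eq_coeff gq_natDegree).mp h
  rw [gq_coeff_zero] at hcd
  rw [gq_coeff_one] at hsum
  have hd : d = -4 - c := by linear_combination -hsum
  have : (1 : RatFunc ℂ) * (c * c) + 4 * c + RatFunc.X = 0 := by
    rw [hcd, hd]; ring
  exact quadratic_ne_zero_of_discrim_ne_sq not_sq_discrim c this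

lemma aeval_s_gq : aeval (xM ^ 2) gq = 0 := by
  unfold gq
  simp only [map_add, map_sub, map_pow, map_mul, aeval_X, aeval_C, algebraMap_KMf_X, map_ofNat]
  ring

lemma s_integral : IsIntegral (RatFunc ℂ) (xM ^ 2) := ⟨gq, gq_monic, aeval_s_gq⟩

lemma minpoly_s : minpoly (RatFunc ℂ) (xM ^ 2) = gq :=
  (minpoly.eq_of_irreducible_of_monic gq_irreducible aeval_s_gq gq_monic).symm

lemma Emid_def : Emid = IntermediateField.adjoin (RatFunc ℂ) {xM ^ 2} := rfl

lemma finrank_Emid : Module.finrank (RatFunc ℂ) Emid = 2 := by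
  rw [Emid_def, IntermediateField.adjoin.finrank s_integral, minpoly_s, gq_natDegree]

instance : FiniteDimensional (RatFunc ℂ) Emid :=
  IntermediateField.adjoin.finiteDimensional s_integral

/-- `s = x²` as an element of `Emid`. -/
def sE : Emid := ⟨xM ^ 2, by
  rw [Emid_def]; exact IntermediateField.mem_adjoin_simple_self (RatFunc ℂ) (xM ^ 2)⟩

/-- The quadratic `Y² - s` over `Emid`. -/
def hq : Emid[X] := X ^ 2 - C sE

lemma hq_monic : hq.Monic := by unfold hq; monicity!

lemma hq_natDegree : hq.natDegree = 2 := by unfold hq; compute_degree!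

lemma aeval_xM_hq : aeval xM hq = 0 := by
  unfold hq
  rw [map_sub, map_pow, aeval_X, aeval_C]
  show xM ^ 2 - xM ^ 2 = 0
  ring

lemma xM_integral_Emid : IsIntegral Emid xM := ⟨hq, hq_monic, aeval_xM_hq⟩

lemma hq_coeff_zero : hq.coeff 0 = -sE := by
  unfold hq
  simp [coeff_X_pow]

lemma hq_coeff_one : hq.coeff 1 = 0 := by
  unfold hq
  simp [coeff_X_pow]

lemma hq_irreducible : Irreducible hq := by
  by_contra h
  obtain ⟨c, d, hcd, hsum⟩ :=
    (hq_monic.not_irreducible_iff_exists_add_mul_eq_coeff hq_natDegree).mp h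
  rw [hq_coeff_zero] at hcd
  rw [hq_coeff_one] at hsum
  have hd : d = -c := by linear_combination -hsum
  have hc2 : c ^ 2 = sE := by rw [hd] at hcd; linear_combination hcd
  have hcoe : ((c : Mf)) ^ 2 = xM ^ 2 := by
    have := congrArg (Subtype.val) hc2
    push_cast at this
    exact this
  have hfac : ((c : Mf) - xM) * ((c : Mf) + xM) = 0 := by linear_combination hcoe
  have hxE : xM ∈ Emid := by
    rcases mul_eq_zero.mp hfac with h1 | h1
    · have : xM = (c : Mf) := by linear_combination -h1
      rw [this]; exact c.2
    · have : xM = -(c : Mf) := by linear_combination h1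
      rw [this]; exact Emid.neg_mem c.2
  exact xM_not_mem_Emid hxE

lemma minpoly_xM_Emid : minpoly Emid xM = hq :=
  (minpoly.eq_of_irreducible_of_monic hq_irreducible aeval_xM_hq hq_monic).symm

lemma adjoin_xM_Emid_top : IntermediateField.adjoin Emid {xM} = ⊤ := by
  rw [eq_top_iff]
  intro r _
  refine ratfunc_mem_subfield (IntermediateField.adjoin Emid {xM}).toSubfield ?_ ?_ r
  · intro c
    have hmem : algebraMap (RatFunc ℂ) Mf (RatFunc.C c)
        ∈ IntermediateField.adjoin Emid {xM} :=
      (IntermediateField.adjoin Emid {xM}).algebraMap_mem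
        ⟨_, Emid.algebraMap_mem (RatFunc.C c)⟩
    have h1 : (RatFunc.C c : Mf) = algebraMap (RatFunc ℂ) Mf (RatFunc.C c) := by
      rw [algebraMap_KMf_C]
      show RatFunc.C c = algebraMap ℂ (RatFunc ℂ) c
      rw [RatFunc.algebraMap_eq_C]
    rw [h1]
    exact hmem
  · exact IntermediateField.mem_adjoin_simple_self Emid xM

lemma finrank_Emid_Mf : Module.finrank Emid Mf = 2 := by
  have h1 := IntermediateField.adjoin.finrank xM_integral_Emid
  rw [minpoly_xM_Emid, hq_natDegree] at h1
  rw [← IntermediateField.finrank_top' (F := Emid) (E := Mf), ← adjoin_xM_Emid_top]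
  exact h1

instance : FiniteDimensional Emid Mf := by
  have : FiniteDimensional Emid (IntermediateField.adjoin Emid {xM}) :=
    IntermediateField.adjoin.finiteDimensional xM_integral_Emid
  rw [adjoin_xM_Emid_top] at this
  exact (IntermediateField.topEquiv (F := Emid) (E := Mf)).toLinearEquiv.finiteDimensional

lemma finrank_K_Mf : Module.finrank (RatFunc ℂ) Mf = 4 := by
  have := Module.finrank_mul_finrank (RatFunc ℂ) Emid Mf
  rw [finrank_Emid, finrank_Emid_Mf] at this
  omega

instance : FiniteDimensional (RatFunc ℂ) Mf :=
  FiniteDimensional.trans (RatFunc ℂ) Emid Mf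

/-- `4 - x²` in `Mf`. -/
def cN : Mf := 4 - xM ^ 2

lemma cN_not_sq (b : Mf) : b ^ 2 ≠ cN := by
  intro hb
  have h1 : (4 : RatFunc ℂ) - RatFunc.X ^ 2
      = algebraMap ℂ[X] (RatFunc ℂ)
        (Polynomial.C (-1) * (X - Polynomial.C 2) * (X + Polynomial.C 2)) := by
    simp [map_mul, map_sub, map_add, RatFunc.algebraMap_X, RatFunc.algebraMap_C, map_ofNat]
    ring
  have hprod : (Polynomial.C (-1 : ℂ) * (X - Polynomial.C 2) * (X + Polynomial.C 2) : ℂ[X]) ≠ 0 := by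
    refine mul_ne_zero (mul_ne_zero (by simp) (X_sub_C_ne_zero 2)) ?_
    intro h0
    have := congrArg (Polynomial.eval 0) h0
    simp at this
  have h2 : ¬ IsSquare (algebraMap ℂ[X] (RatFunc ℂ)
      (Polynomial.C (-1) * (X - Polynomial.C 2) * (X + Polynomial.C 2))) := by
    apply not_isSquare_of_odd_rootMultiplicity _ hprod 2
    rw [Polynomial.rootMultiplicity_mul hprod,
      Polynomial.rootMultiplicity_mul (mul_ne_zero (by simp) (X_sub_C_ne_zero 2)),
      Polynomial.rootMultiplicity_eq_zero (by simp [Polynomial.IsRoot]),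
      Polynomial.rootMultiplicity_X_sub_C_self,
      Polynomial.rootMultiplicity_eq_zero (by simp [Polynomial.IsRoot])]
    exact odd_one
  apply h2
  refine ⟨b, ?_⟩
  rw [← h1]
  have hb' : b ^ 2 = (4 : Mf) - xM ^ 2 := hb
  exact (by linear_combination -hb' : (4 : Mf) - xM ^ 2 = b * b)

/-- The quadratic `Y² - (4 - x²)` over `Mf`. -/
def q2 : Mf[X] := X ^ 2 - C cN

lemma q2_irreducible : Irreducible q2 :=
  X_pow_sub_C_irreducible_of_prime Nat.prime_two cN_not_sq

instance : Fact (Irreducible q2) := ⟨q2_irreducible⟩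

lemma q2_monic : q2.Monic := by unfold q2; monicity!

lemma q2_natDegree : q2.natDegree = 2 := by unfold q2; compute_degree!

/-- The splitting field model: `Mf` with a square root of `4 - x²` adjoined. -/
def Nf : Type := AdjoinRoot q2

instance : Field Nf := inferInstanceAs (Field (AdjoinRoot q2))
instance : Algebra Mf Nf := inferInstanceAs (Algebra Mf (AdjoinRoot q2))

/-- The images of `x` and the new root `y` in `Nf`. -/
def xN : Nf := algebraMap Mf Nf xM

def yN : Nf := AdjoinRoot.root q2

lemma yN_sq : yN ^ 2 = 4 - xN ^ 2 := by
  have h0 : yN ^ 2 - algebraMap Mf Nf cN = 0 := by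
    have h := AdjoinRoot.eval₂_root q2
    rw [show q2.eval₂ (AdjoinRoot.of q2) (AdjoinRoot.root q2)
        = (X ^ 2 - C cN).eval₂ (AdjoinRoot.of q2) (AdjoinRoot.root q2) from rfl,
      eval₂_sub, eval₂_pow, eval₂_X, eval₂_C] at h
    exact h
  have h1 : algebraMap Mf Nf cN = 4 - xN ^ 2 := by
    rw [show cN = 4 - xM ^ 2 from rfl, map_sub, map_pow, map_ofNat]
    rfl
  rw [h1] at h0
  linear_combination h0

lemma finrank_Mf_Nf : Module.finrank Mf Nf = 2 := by
  have h := (AdjoinRoot.powerBasis (f := q2) q2_monic.ne_zero).finrank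
  rw [AdjoinRoot.powerBasis_dim, q2_natDegree] at h
  exact h

instance : FiniteDimensional Mf Nf :=
  Module.Finite.of_basis (AdjoinRoot.powerBasis (f := q2) q2_monic.ne_zero).basis

instance : Algebra (RatFunc ℂ) Nf :=
  ((algebraMap Mf Nf).comp (algebraMap (RatFunc ℂ) Mf)).toAlgebra

instance : IsScalarTower (RatFunc ℂ) Mf Nf :=
  IsScalarTower.of_algebraMap_eq fun _ => rfl

instance : FiniteDimensional (RatFunc ℂ) Nf :=
  FiniteDimensional.trans (RatFunc ℂ) Mf Nf

lemma finrank_K_Nf : Module.finrank (RatFunc ℂ) Nf = 8 := by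
  have := Module.finrank_mul_finrank (RatFunc ℂ) Mf Nf
  rw [finrank_K_Mf, finrank_Mf_Nf] at this
  omega

/-- The quartic. -/
def pQ : (RatFunc ℂ)[X] := X ^ 4 - C 4 * X ^ 2 + C (RatFunc.X : RatFunc ℂ)

lemma pQ_monic : pQ.Monic := by unfold pQ; monicity!

lemma pQ_ne_zero : pQ ≠ 0 := pQ_monic.ne_zero

lemma algebraMap_K_Nf_X :
    algebraMap (RatFunc ℂ) Nf RatFunc.X = 4 * xN ^ 2 - xN ^ 4 := by
  rw [IsScalarTower.algebraMap_apply (RatFunc ℂ) Mf Nf, algebraMap_KMf_X,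
    map_sub, map_mul, map_pow, map_pow, map_ofNat]
  rfl

lemma quartic_factor (a b : Nf) (h : b ^ 2 = 4 - a ^ 2) :
    (X ^ 4 - C 4 * X ^ 2 + C (4 * a ^ 2 - a ^ 4) : Nf[X])
      = (X - C a) * (X - C (-a)) * (X - C b) * (X - C (-b)) := by
  have h4 : (C 4 : Nf[X]) = C (a ^ 2) + C (b ^ 2) := by
    rw [← map_add]
    congr 1
    linear_combination -h
  have h5 : (C (4 * a ^ 2 - a ^ 4) : Nf[X]) = C (a ^ 2) * C (b ^ 2) := by
    rw [← map_mul]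
    congr 1
    linear_combination -(a ^ 2) * h
  rw [h4, h5]
  simp only [map_pow, map_neg]
  ring

lemma pQ_map_factor :
    pQ.map (algebraMap (RatFunc ℂ) Nf)
      = (X - C xN) * (X - C (-xN)) * (X - C yN) * (X - C (-yN)) := by
  have h1 : pQ.map (algebraMap (RatFunc ℂ) Nf)
      = X ^ 4 - C 4 * X ^ 2 + C (4 * xN ^ 2 - xN ^ 4) := by
    unfold pQ
    rw [Polynomial.map_add, Polynomial.map_sub, Polynomial.map_pow, Polynomial.map_mul,
      Polynomial.map_pow, Polynomial.map_X, Polynomial.map_C, Polynomial.map_C,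
      algebraMap_K_Nf_X, map_ofNat]
  rw [h1]
  exact quartic_factor xN yN yN_sq

lemma pQ_splits : Splits (pQ.map (algebraMap (RatFunc ℂ) Nf)) := by
  rw [pQ_map_factor]
  exact Splits.mul (Splits.mul (Splits.mul (Splits.X_sub_C _) (Splits.X_sub_C _))
    (Splits.X_sub_C _)) (Splits.X_sub_C _)

lemma aeval_xN_pQ : aeval xN pQ = 0 := by
  unfold pQ
  simp only [map_add, map_sub, map_pow, map_mul, aeval_X, aeval_C, algebraMap_K_Nf_X, map_ofNat]
  ring

lemma aeval_yN_pQ : aeval yN pQ = 0 := by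
  unfold pQ
  simp only [map_add, map_sub, map_pow, map_mul, aeval_X, aeval_C, algebraMap_K_Nf_X, map_ofNat]
  linear_combination (yN ^ 2 - xN ^ 2) * yN_sq

lemma xN_mem_rootSet : xN ∈ pQ.rootSet Nf := by
  rw [Polynomial.mem_rootSet]
  exact ⟨pQ_ne_zero, aeval_xN_pQ⟩

lemma yN_mem_rootSet : yN ∈ pQ.rootSet Nf := by
  rw [Polynomial.mem_rootSet]
  exact ⟨pQ_ne_zero, aeval_yN_pQ⟩

lemma adjoin_rootSet_top :
    IntermediateField.adjoin (RatFunc ℂ) (pQ.rootSet Nf) = ⊤ := by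
  set T := IntermediateField.adjoin (RatFunc ℂ) (pQ.rootSet Nf) with hT
  rw [eq_top_iff]
  intro n _
  have hxT : xN ∈ T := IntermediateField.subset_adjoin _ _ xN_mem_rootSet
  have hyT : yN ∈ T := IntermediateField.subset_adjoin _ _ yN_mem_rootSet
  have hMf : ∀ m : Mf, algebraMap Mf Nf m ∈ T := by
    intro m
    have : ∀ r : RatFunc ℂ, r ∈ (T.toSubfield.comap (algebraMap Mf Nf) : Subfield Mf) := by
      refine fun r => ratfunc_mem_subfield _ ?_ ?_ r
      · intro c
        have h1 : (RatFunc.C c : Mf) = algebraMap (RatFunc ℂ) Mf (RatFunc.C c) := by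
          rw [algebraMap_KMf_C]
          show RatFunc.C c = algebraMap ℂ (RatFunc ℂ) c
          rw [RatFunc.algebraMap_eq_C]
        show algebraMap Mf Nf (RatFunc.C c : Mf) ∈ T
        rw [h1, ← IsScalarTower.algebraMap_apply (RatFunc ℂ) Mf Nf]
        exact T.algebraMap_mem _
      · exact hxT
    exact this m
  have hn : n ∈ Algebra.adjoin Mf {yN} := by
    exact Algebra.eq_top_iff.mp (AdjoinRoot.adjoinRoot_eq_top (f := q2)) n
  refine Algebra.adjoin_induction ?_ ?_ ?_ ?_ hn
  · rintro z rfl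
    exact hyT
  · exact hMf
  · exact fun a b _ _ ha hb => T.add_mem ha hb
  · exact fun a b _ _ ha hb => T.mul_mem ha hb

lemma algebra_adjoin_rootSet_top :
    Algebra.adjoin (RatFunc ℂ) (pQ.rootSet Nf) = ⊤ := by
  have halg : ∀ x ∈ pQ.rootSet Nf, IsAlgebraic (RatFunc ℂ) x := by
    haveI := Algebra.IsAlgebraic.of_finite (RatFunc ℂ) Nf
    exact fun x _ => Algebra.IsAlgebraic.isAlgebraic x
  have h := IntermediateField.adjoin_toSubalgebra_of_isAlgebraic halg
  rw [adjoin_rootSet_top, IntermediateField.top_toSubalgebra] at h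
  exact h.symm

instance : IsSplittingField (RatFunc ℂ) Nf pQ := ⟨pQ_splits, algebra_adjoin_rootSet_top⟩

end QuarticGaloisAux

/-- The Galois group of the splitting field of `X⁴ - 4X² + t` over `ℂ(t)`
has exactly 8 elements. -/
theorem galois_group_of_quartic_has_card_eight :
    Nat.card
      ((X ^ 4 - C 4 * X ^ 2 + C (RatFunc.X : RatFunc ℂ) : (RatFunc ℂ)[X]).SplittingField
        ≃ₐ[RatFunc ℂ]
       (X ^ 4 - C 4 * X ^ 2 + C (RatFunc.X : RatFunc ℂ) : (RatFunc ℂ)[X]).SplittingField)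
      = 8 := by
  have hp : (X ^ 4 - C 4 * X ^ 2 + C (RatFunc.X : RatFunc ℂ) : (RatFunc ℂ)[X]) = pQ := rfl
  rw [hp]
  haveI : Algebra.IsAlgebraic (RatFunc ℂ) pQ.SplittingField :=
    Algebra.IsAlgebraic.of_finite _ _
  haveI : IsGalois (RatFunc ℂ) pQ.SplittingField := ⟨⟩
  rw [IsGalois.card_aut_eq_finrank]
  have e : Nf ≃ₐ[RatFunc ℂ] pQ.SplittingField := IsSplittingField.algEquiv Nf pQ
  rw [← e.toLinearEquiv.finrank_eq]
  exact finrank_K_Nf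
end

section
/- Let F : ℂⁿ → ℂⁿ be a twice continuously (complex-)differentiable map, let x* be a zero of F at which the derivative of F is an invertible linear map, and define the Newton iteration N_F(x) = x − (DF(x))⁻¹(F(x)). Then there exists ε > 0 such that for every x with ‖x − x*‖ < ε, the sequence defined by x₀ = x and x_{i+1} = N_F(x_i) satisfies ‖x* − x_i‖ ≤ 2^{1−2^i} · ‖x* − x‖ for all i ≥ 0. -/
open Filter Topology Metric

/-- **Local quadratic convergence of Newton's method.**
If `F : ℂⁿ → ℂⁿ` is twice continuously differentiable, `F x* = 0`, and the derivative
of `F` at `x*` is invertible, then there is `ε > 0` such that for every starting point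
`x` with `‖x - x*‖ < ε`, the Newton iterates `x₀ = x`, `x_{i+1} = x_i - (DF(x_i))⁻¹ F(x_i)`
satisfy `‖x* - x_i‖ ≤ 2^(1 - 2^i) * ‖x* - x‖` for all `i`. -/
theorem newton_iteration_quadratic_convergence {n : ℕ}
    (F : EuclideanSpace ℂ (Fin n) → EuclideanSpace ℂ (Fin n))
    (hF : ContDiff ℂ 2 F) (xs : EuclideanSpace ℂ (Fin n)) (hxs : F xs = 0)
    (hinv : IsUnit (fderiv ℂ F xs)) :
    ∃ ε > (0 : ℝ), ∀ x : EuclideanSpace ℂ (Fin n), ‖x - xs‖ < ε →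
      ∀ i : ℕ,
        ‖xs - (fun y => y - (fderiv ℂ F y).inverse (F y))^[i] x‖ ≤
          (2 : ℝ) ^ ((1 : ℤ) - 2 ^ i) * ‖xs - x‖ := by
  have hF1 : ContDiff ℂ 1 (fderiv ℂ F) := hF.fderiv_right (by norm_num)
  have hFd : Differentiable ℂ F := hF.differentiable (by norm_num)
  -- Lipschitz bound on the derivative near xs
  obtain ⟨L, t, ht, hlip⟩ := hF1.contDiffAt.exists_lipschitzOnWith (x := xs)
  -- the derivative is a unit near xs, with inverse bounded by M
  set M : ℝ := ‖Ring.inverse (fderiv ℂ F xs)‖ + 1 with hM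
  have hU : {y : EuclideanSpace ℂ (Fin n) | IsUnit (fderiv ℂ F y)} ∈ 𝓝 xs :=
    (Units.isOpen.preimage hF1.continuous).mem_nhds hinv
  have hg : ContinuousAt (fun y => Ring.inverse (fderiv ℂ F y)) xs := by
    exact (hinv.unit_spec ▸ NormedRing.inverse_continuousAt hinv.unit).comp
      hF1.continuous.continuousAt
  have hMev : {y : EuclideanSpace ℂ (Fin n) |
      ‖Ring.inverse (fderiv ℂ F y)‖ ≤ M} ∈ 𝓝 xs := by
    have := hg.norm.eventually_lt_const (lt_add_one ‖Ring.inverse (fderiv ℂ F xs)‖)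
    exact this.mono fun y hy => le_of_lt hy
  obtain ⟨r, hr, hball⟩ := Metric.nhds_basis_closedBall.mem_iff.mp
    (Filter.inter_mem (Filter.inter_mem hU hMev) ht)
  set K : ℝ := M * L with hK
  have hM0 : (0:ℝ) < M := by positivity
  have hK0 : (0:ℝ) ≤ K := by positivity
  -- key quadratic estimate
  have key : ∀ y : EuclideanSpace ℂ (Fin n), ‖xs - y‖ ≤ r / 2 →
      ‖xs - (y - (fderiv ℂ F y).inverse (F y))‖ ≤ K * ‖xs - y‖ ^ 2 := by
    intro y hy
    have hmem : ∀ z : EuclideanSpace ℂ (Fin n), z ∈ Metric.closedBall y ‖xs - y‖ →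
        z ∈ Metric.closedBall xs r := by
      intro z hz
      rw [Metric.mem_closedBall] at hz ⊢
      have : dist z xs ≤ dist z y + dist y xs := dist_triangle _ _ _
      have h2 : dist y xs ≤ r / 2 := by rwa [dist_eq_norm, norm_sub_rev]
      linarith [hz, h2, this]
    have hy' : y ∈ Metric.closedBall xs r :=
      hmem y (Metric.mem_closedBall_self (norm_nonneg _))
    obtain ⟨⟨hyU, hyM⟩, hyt⟩ := hball hy'
    -- Taylor / mean value estimate on the ball around y
    have taylor : ‖F xs - F y - (fderiv ℂ F y) (xs - y)‖ ≤ (L * ‖xs - y‖) * ‖xs - y‖ := by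
      refine (convex_closedBall y ‖xs - y‖).norm_image_sub_le_of_norm_hasFDerivWithin_le'
        (fun z _ => (hFd z).hasFDerivAt.hasFDerivWithinAt) ?_
        (Metric.mem_closedBall_self (norm_nonneg _))
        (by rw [Metric.mem_closedBall, dist_eq_norm])
      intro z hz
      have hzt : z ∈ t := (hball (hmem z hz)).2
      have := hlip.dist_le_mul z hzt y hyt
      rw [dist_eq_norm, dist_eq_norm] at this
      refine this.trans ?_
      have : ‖z - y‖ ≤ ‖xs - y‖ := by
        rw [Metric.mem_closedBall, dist_eq_norm] at hz; exact hz
      exact mul_le_mul_of_nonneg_left this L.coe_nonneg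
    -- algebra with the inverse
    set B := Ring.inverse (fderiv ℂ F y) with hB
    have hBinv : (fderiv ℂ F y).inverse = B :=
      (congrFun ContinuousLinearMap.ringInverse_eq_inverse (fderiv ℂ F y)).symm
    have hBA : B * (fderiv ℂ F y) = 1 := Ring.inverse_mul_cancel _ hyU
    have hid : ∀ v : EuclideanSpace ℂ (Fin n), B ((fderiv ℂ F y) v) = v := by
      intro v
      have := congrArg (fun (T : EuclideanSpace ℂ (Fin n) →L[ℂ] EuclideanSpace ℂ (Fin n)) => T v) hBA
      simpa using this
    have halg : xs - (y - (fderiv ℂ F y).inverse (F y)) =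
        -(B (F xs - F y - (fderiv ℂ F y) (xs - y))) := by
      rw [hBinv]
      have h1 : B (F xs - F y - (fderiv ℂ F y) (xs - y)) =
          B (F xs) - B (F y) - (xs - y) := by
        rw [map_sub, map_sub, hid]
      rw [h1, hxs, map_zero]
      abel
    rw [halg, norm_neg]
    calc ‖B (F xs - F y - (fderiv ℂ F y) (xs - y))‖
        ≤ ‖B‖ * ‖F xs - F y - (fderiv ℂ F y) (xs - y)‖ := B.le_opNorm _
      _ ≤ M * ((L * ‖xs - y‖) * ‖xs - y‖) := by
          apply mul_le_mul hyM taylor (norm_nonneg _) (le_of_lt hM0)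
      _ = K * ‖xs - y‖ ^ 2 := by rw [hK]; ring
  -- choose ε
  refine ⟨min (r / 2) (1 / (2 * (K + 1))), lt_min (by positivity) (by positivity), ?_⟩
  intro x hx i
  set a : ℕ → ℝ := fun i => (2 : ℝ) ^ ((1 : ℤ) - 2 ^ i) with ha
  have ha0 : ∀ i, (0:ℝ) < a i := fun i => by positivity
  have ha1 : ∀ i, a i ≤ 1 := by
    intro i
    apply zpow_le_one_of_nonpos₀ one_le_two
    have : (1:ℤ) ≤ 2 ^ i := one_le_pow₀ one_le_two
    omega
  have hasq : ∀ i, (a i) ^ 2 = 2 * a (i + 1) := by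
    intro i
    have : ((1 : ℤ) - 2 ^ i) + ((1 : ℤ) - 2 ^ i) = 1 + (1 - 2 ^ (i+1)) := by
      rw [pow_succ]; ring
    rw [ha]
    simp only [sq]
    rw [← zpow_add₀ (two_ne_zero), this, zpow_add₀ (two_ne_zero), zpow_one]
  have hxε : ‖xs - x‖ < min (r / 2) (1 / (2 * (K + 1))) := by
    rwa [norm_sub_rev]
  have he0r : ‖xs - x‖ ≤ r / 2 := le_of_lt (lt_of_lt_of_le hxε (min_le_left _ _))
  have hKe0 : K * ‖xs - x‖ ≤ 1 / 2 := by
    have h1 : ‖xs - x‖ ≤ 1 / (2 * (K + 1)) := le_of_lt (lt_of_lt_of_le hxε (min_le_right _ _))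
    have h2 : K * ‖xs - x‖ ≤ K * (1 / (2 * (K + 1))) :=
      mul_le_mul_of_nonneg_left h1 hK0
    refine h2.trans ?_
    rw [mul_one_div, div_le_div_iff₀ (by positivity) two_pos]
    nlinarith
  induction i with
  | zero => simp [norm_sub_rev]
  | succ i ih =>
    rw [Function.iterate_succ_apply']
    set y := (fun y => y - (fderiv ℂ F y).inverse (F y))^[i] x with hy
    have hey : ‖xs - y‖ ≤ a i * ‖xs - x‖ := ih
    have hee0 : ‖xs - y‖ ≤ ‖xs - x‖ := by
      refine hey.trans ?_
      exact mul_le_of_le_one_left (norm_nonneg _) (ha1 i)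
    have hkey := key y (hee0.trans he0r)
    refine hkey.trans ?_
    calc K * ‖xs - y‖ ^ 2 ≤ K * (a i * ‖xs - x‖) ^ 2 := by
          apply mul_le_mul_of_nonneg_left _ hK0
          exact pow_le_pow_left₀ (norm_nonneg _) hey 2
      _ = (K * ‖xs - x‖) * ((a i) ^ 2 * ‖xs - x‖) := by ring
      _ ≤ (1 / 2) * ((a i) ^ 2 * ‖xs - x‖) := by
          apply mul_le_mul_of_nonneg_right hKe0
          positivity
      _ = (1 / 2) * (2 * a (i+1) * ‖xs - x‖) := by rw [hasq]
      _ = a (i+1) * ‖xs - x‖ := by ring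
end

section
/- Let f : E → B be a covering map of topological spaces and let b ∈ B. Then there exists a group homomorphism h from the fundamental group π₁(B, b) to the group of permutations of the fiber f⁻¹({b}) such that for every loop γ at b, every point v of the fiber, and every path δ in E starting at v that lifts γ (i.e., f ∘ δ = γ), the permutation h([γ]) sends v to the endpoint δ(1) of the lift. (The image of h is the monodromy group of the cover.) -/
open Set unitInterval

noncomputable section
namespace Monodromy

/-- partition point `k/(n+1)` clamped into `I`. -/
def pt (n k : ℕ) : I := Set.projIcc 0 1 zero_le_one ((k : ℝ) / (n + 1))

lemma pt_zero (n : ℕ) : pt n 0 = 0 := by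
  simp [pt, Set.projIcc_left]

lemma pt_last (n : ℕ) : pt n (n + 1) = 1 := by
  have : ((n : ℝ) + 1) / (n + 1) = 1 := div_self (by positivity)
  simp only [pt]
  rw [show ((n + 1 : ℕ) : ℝ) = (n : ℝ) + 1 by push_cast; ring, this, Set.projIcc_right]
  rfl

lemma pt_mono (n : ℕ) : Monotone (pt n) := fun j k hjk =>
  Set.monotone_projIcc _ (by
    apply div_le_div_of_nonneg_right ?_ (by positivity)
    exact_mod_cast hjk)

lemma pt_coe (n k : ℕ) : ((pt n k : I) : ℝ) = min 1 ((k : ℝ) / (n + 1)) := by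
  rw [pt, Set.coe_projIcc]
  exact max_eq_right (le_min zero_le_one (by positivity))

lemma pt_diff (n k : ℕ) : ((pt n (k+1) : I) : ℝ) - pt n k ≤ 1 / (n + 1) := by
  rw [pt_coe, pt_coe]
  have h : ((k : ℝ) + 1) / (n + 1) = (k : ℝ) / (n+1) + 1 / (n+1) := by ring
  push_cast
  rw [h]
  rcases le_total ((k : ℝ) / (n+1)) 1 with hk | hk
  · rw [min_eq_right hk]
    have := min_le_right 1 ((k : ℝ) / (n+1) + 1/(n+1))
    linarith
  · have h0 : (0:ℝ) ≤ 1/(n+1) := by positivity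
    rw [min_eq_left hk, min_eq_left (by linarith)]
    linarith

lemma dist_le_of_mem_Icc {n k : ℕ} {s : I} (hs : s ∈ Icc (pt n k) (pt n (k+1))) :
    dist s (pt n k) ≤ 1 / (n + 1) := by
  rw [Subtype.dist_eq, Real.dist_eq, abs_of_nonneg (sub_nonneg.2 (by exact_mod_cast hs.1))]
  have h2 : (s : ℝ) ≤ pt n (k+1) := hs.2
  have := pt_diff n k
  linarith

variable {E B : Type*} [TopologicalSpace E] [TopologicalSpace B] {f : E → B}

lemma range_closed (hf : IsCoveringMap f) : IsClosed (Set.range f) := by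
  rw [← isOpen_compl_iff, isOpen_iff_forall_mem_open]
  intro x hx
  obtain ⟨-, U, hxU, hU, -, H, -⟩ := hf x
  refine ⟨U, fun y hyU hy => ?_, hU, hxU⟩
  obtain ⟨e, he⟩ := hy
  have hxe : f ⁻¹' {x} → False := fun v => hx ⟨v.1, v.2⟩
  exact hxe (H ⟨e, by rw [Set.mem_preimage, he]; exact hyU⟩).2

lemma fiber_nonempty (hf : IsCoveringMap f) {X : Type*} [TopologicalSpace X] [PreconnectedSpace X]
    (g : C(X, B)) (x₀ : X) (e : E) (he : f e = g x₀) (x : X) : Nonempty (f ⁻¹' {g x}) := by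
  have hc : IsClopen (g ⁻¹' Set.range f) :=
    ⟨(range_closed hf).preimage g.continuous, hf.isOpenMap.isOpen_range.preimage g.continuous⟩
  have := hc.eq_univ ⟨x₀, e, he⟩
  obtain ⟨e', he'⟩ : g x ∈ Set.range f := by
    rw [← Set.mem_preimage, this]; trivial
  exact ⟨⟨e', he'⟩⟩

theorem exists_lift (hf : IsCoveringMap f) (γ : C(I, B)) (e : E) (he : f e = γ 0) :
    ∃ δ : C(I, E), δ 0 = e ∧ ∀ s, f (δ s) = γ s := by
  classical
  haveI hne : ∀ s, Nonempty (f ⁻¹' {γ s}) := fiber_nonempty hf γ 0 e he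
  obtain ⟨ρ, ρpos, hρ⟩ := lebesgue_number_lemma_of_metric (isCompact_univ (X := I))
    (c := fun x : I => γ ⁻¹' (hf (γ x)).toTrivialization.baseSet)
    (fun x => (hf (γ x)).toTrivialization.open_baseSet.preimage γ.continuous)
    (fun s _ => Set.mem_iUnion.2 ⟨s, (hf (γ s)).mem_toTrivialization_baseSet⟩)
  obtain ⟨n, hn⟩ := exists_nat_one_div_lt ρpos
  have cov : ∀ k : ℕ, ∃ x : I, ∀ s ∈ Icc (pt n k) (pt n (k+1)),
      γ s ∈ (hf (γ x)).toTrivialization.baseSet := by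
    intro k
    obtain ⟨x, hx⟩ := hρ (pt n k) trivial
    exact ⟨x, fun s hs => hx (lt_of_le_of_lt (dist_le_of_mem_Icc hs) hn)⟩
  choose x hx using cov
  have key : ∀ k : ℕ, ∃ δ : C(I, E), δ 0 = e ∧ ∀ s ≤ pt n k, f (δ s) = γ s := by
    intro k; induction k with
    | zero =>
      refine ⟨ContinuousMap.const I e, rfl, fun s hs => ?_⟩
      rw [pt_zero] at hs
      have : s = 0 := le_antisymm hs nonneg'
      subst this; simpa using he
    | succ k ih =>
      obtain ⟨δ, hδ0, hδ⟩ := ih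
      set T := (hf (γ (x k))).toTrivialization with hT
      have hkk : pt n k ≤ pt n (k+1) := pt_mono n (Nat.le_succ k)
      have hTk : γ (pt n k) ∈ T.baseSet := hx k _ ⟨le_refl _, hkk⟩
      have hsrc : δ (pt n k) ∈ T.source := T.mem_source.2 (by rw [hδ _ le_rfl]; exact hTk)
      set c := (T (δ (pt n k))).2 with hc
      set q : I → I := fun s => max (pt n k) (min s (pt n (k+1))) with hqdef
      have hq1 : ∀ s, q s ∈ Icc (pt n k) (pt n (k+1)) :=
        fun s => ⟨le_max_left _ _, max_le hkk (min_le_right _ _)⟩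
      have hqcont : Continuous q := continuous_const.max (continuous_id.min continuous_const)
      have hb2 : Continuous fun s : I => T.toPartialHomeomorph.symm (γ (q s), c) := by
        refine T.toPartialHomeomorph.continuousOn_symm.comp_continuous
          (((γ.continuous.comp hqcont)).prodMk continuous_const) (fun s => ?_)
        exact T.mem_target.2 (hx k _ (hq1 s))
      have hbdry : ∀ s : I, s = pt n k → δ s = T.toPartialHomeomorph.symm (γ (q s), c) := by
        intro s hs; rw [hs]
        have hqs : q (pt n k) = pt n k := by
          rw [hqdef]; simp only [min_eq_left hkk, max_self]
        rw [hqs]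
        have h1 : (γ (pt n k), c) = T (δ (pt n k)) := by
          rw [hc, ← hδ _ le_rfl]
          exact T.mk_proj_snd' (by rw [hδ _ le_rfl]; exact hTk)
        rw [h1]; exact (T.toPartialHomeomorph.left_inv hsrc).symm
      refine ⟨⟨fun s => if s ≤ pt n k then δ s else T.toPartialHomeomorph.symm (γ (q s), c),
        δ.continuous.if_le hb2 continuous_id continuous_const hbdry⟩, ?_, ?_⟩
      · simpa [if_pos (nonneg' : (0:I) ≤ pt n k)] using hδ0
      · intro s hs
        simp only [ContinuousMap.coe_mk]
        by_cases hsk : s ≤ pt n k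
        · rw [if_pos hsk]; exact hδ s hsk
        · rw [if_neg hsk]
          have h1 : pt n k ≤ s := le_of_not_ge hsk
          have hqs : q s = s := by rw [hqdef]; simp only [min_eq_left hs, max_eq_right h1]
          rw [hqs]
          exact T.proj_symm_apply (T.mem_target.2 (hx k s ⟨h1, hs⟩))
  obtain ⟨δ, h0, h⟩ := key (n+1)
  exact ⟨δ, h0, fun s => h s (by rw [pt_last]; exact le_one')⟩

lemma ball_preconnected (t₀ : I) (r : ℝ) : IsPreconnected (Metric.ball t₀ r) := by
  have himg : Metric.ball t₀ r = Set.projIcc 0 1 zero_le_one '' Metric.ball (t₀ : ℝ) r := by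
    ext t
    constructor
    · intro ht
      refine ⟨(t : ℝ), ?_, Set.projIcc_val zero_le_one t⟩
      simpa [Metric.mem_ball, Real.dist_eq, Subtype.dist_eq] using ht
    · rintro ⟨y, hy, rfl⟩
      have h1 : dist (Set.projIcc 0 1 zero_le_one y) (Set.projIcc 0 1 zero_le_one (t₀ : ℝ)) ≤
          dist y (t₀ : ℝ) := by
        simpa using (LipschitzWith.projIcc zero_le_one).dist_le_mul y (t₀ : ℝ)
      rw [Set.projIcc_val zero_le_one t₀] at h1
      exact lt_of_le_of_lt h1 hy
  rw [himg]
  exact ((convex_ball (t₀ : ℝ) r).isPreconnected).image _ continuous_projIcc.continuousOn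

theorem endpoint_eq (hf : IsCoveringMap f) {a c : B} {γ₀ γ₁ : Path a c}
    (hom : γ₀.Homotopic γ₁) (δ₀ δ₁ : C(I, E))
    (h₀ : ∀ s, f (δ₀ s) = γ₀ s) (h₁ : ∀ s, f (δ₁ s) = γ₁ s)
    (h00 : δ₀ 0 = δ₁ 0) : δ₀ 1 = δ₁ 1 := by
  classical
  obtain ⟨H⟩ := hom
  have Hsrc : ∀ t : I, H (t, 0) = γ₀ 0 := fun t => H.prop' t 0 (by norm_num)
  have Htgt : ∀ t : I, H (t, 1) = γ₀ 1 := fun t => H.prop' t 1 (by norm_num)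
  haveI hne : ∀ p : I × I, Nonempty (f ⁻¹' {H p}) := fun p =>
    fiber_nonempty hf H.toContinuousMap (0, 0) (δ₀ 0) (by rw [h₀ 0]; exact (H.apply_zero 0).symm) p
  -- lifts of each horizontal path
  have hex : ∀ t : I, ∃ δ : C(I, E), δ 0 = δ₀ 0 ∧ ∀ s, f (δ s) = H (t, s) := by
    intro t
    have : f (δ₀ 0) = (H.toContinuousMap.curry t) 0 := by
      rw [h₀ 0, ContinuousMap.curry_apply]
      exact (Hsrc t).symm
    obtain ⟨δ, hδ0, hδ⟩ := exists_lift hf (H.toContinuousMap.curry t) (δ₀ 0) this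
    exact ⟨δ, hδ0, fun s => by simpa using hδ s⟩
  choose L hL0 hL using hex
  -- local constancy of t ↦ L t 1
  have loc : ∀ t₀ : I, ∃ N : Set I, IsOpen N ∧ t₀ ∈ N ∧ ∀ t ∈ N, L t 1 = L t₀ 1 := by
    intro t₀
    obtain ⟨ρ, ρpos, hρ⟩ := lebesgue_number_lemma_of_metric (isCompact_univ (X := I × I))
      (c := fun x : I × I => (⇑H) ⁻¹' (hf (H x)).toTrivialization.baseSet)
      (fun x => (hf (H x)).toTrivialization.open_baseSet.preimage H.continuous)
      (fun p _ => Set.mem_iUnion.2 ⟨p, (hf (H p)).mem_toTrivialization_baseSet⟩)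
    obtain ⟨n, hn⟩ := exists_nat_one_div_lt (half_pos ρpos)
    set N : Set I := Metric.ball t₀ (ρ/2) with hN
    have hNopen : IsOpen N := Metric.isOpen_ball
    have ht₀N : t₀ ∈ N := Metric.mem_ball_self (half_pos ρpos)
    have hNpre : IsPreconnected N := ball_preconnected t₀ (ρ/2)
    have cov : ∀ k : ℕ, ∃ x : I × I, ∀ t ∈ N, ∀ s ∈ Icc (pt n k) (pt n (k+1)),
        H (t, s) ∈ (hf (H x)).toTrivialization.baseSet := by
      intro k
      obtain ⟨x, hx⟩ := hρ (t₀, pt n k) trivial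
      refine ⟨x, fun t ht s hs => hx ?_⟩
      rw [Metric.mem_ball, Prod.dist_eq]
      exact max_lt (lt_trans (Metric.mem_ball.1 ht) (half_lt_self ρpos))
        (lt_of_le_of_lt (dist_le_of_mem_Icc hs) (lt_trans hn (half_lt_self ρpos)))
    choose x hx using cov
    set T : ∀ k : ℕ, Bundle.Trivialization (f ⁻¹' {H (x k)}) f := fun k => (hf (H (x k))).toTrivialization
      with hTdef
    haveI hdisc : ∀ k : ℕ, DiscreteTopology (f ⁻¹' {H (x k)}) := fun k => (hf (H (x k))).1
    -- membership in sources
    have hmem : ∀ k : ℕ, ∀ t ∈ N, ∀ s ∈ Icc (pt n k) (pt n (k+1)), L t s ∈ (T k).source :=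
      fun k t ht s hs => (T k).mem_source.2 (by rw [hL t s]; exact hx k t ht s hs)
    -- constancy of the fiber coordinate along each subinterval
    have seg : ∀ k : ℕ, ∀ t ∈ N,
        ((T k) (L t (pt n (k+1)))).2 = ((T k) (L t (pt n k))).2 := by
      intro k t ht
      have hkk : pt n k ≤ pt n (k+1) := pt_mono n (Nat.le_succ k)
      set q : I → I := fun s => max (pt n k) (min s (pt n (k+1))) with hqdef
      have hq1 : ∀ s, q s ∈ Icc (pt n k) (pt n (k+1)) :=
        fun s => ⟨le_max_left _ _, max_le hkk (min_le_right _ _)⟩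
      have hqcont : Continuous q := continuous_const.max (continuous_id.min continuous_const)
      have hgc : Continuous fun s : I => ((T k) (L t (q s))).2 := by
        refine Continuous.snd ?_
        exact ((T k).toPartialHomeomorph.continuousOn).comp_continuous
          ((L t).continuous.comp hqcont) (fun s => hmem k t ht (q s) (hq1 s))
      have hsub := (isPreconnected_univ.image _ hgc.continuousOn).subsingleton
        (Set.mem_image_of_mem _ (Set.mem_univ (pt n (k+1))))
        (Set.mem_image_of_mem _ (Set.mem_univ (pt n k)))
      have hq2 : q (pt n (k+1)) = pt n (k+1) := by
        rw [hqdef]; simp only [min_self, max_eq_right hkk]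
      have hq3 : q (pt n k) = pt n k := by
        rw [hqdef]; simp only [min_eq_left hkk, max_self]
      rw [hq2, hq3] at hsub
      exact hsub
    -- the key induction on k
    have key : ∀ k : ℕ, ∀ t ∈ N, ((T k) (L t (pt n k))).2 = ((T k) (L t₀ (pt n k))).2 := by
      intro k; induction k with
      | zero => intro t ht; rw [pt_zero, hL0 t, hL0 t₀]
      | succ k ih =>
        intro t ht
        set d := ((T k) (L t₀ (pt n k))).2 with hd
        have recon : ∀ u ∈ N, ((T k) (L u (pt n (k+1)))).2 = d →
            L u (pt n (k+1)) =
              (T k).toPartialHomeomorph.symm (H (u, pt n (k+1)), d) := by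
          intro u hu hcoord
          have hs1 : pt n (k+1) ∈ Icc (pt n k) (pt n (k+1)) :=
            ⟨pt_mono n (Nat.le_succ k), le_refl _⟩
          have hm : L u (pt n (k+1)) ∈ (T k).source := hmem k u hu _ hs1
          have : (T k) (L u (pt n (k+1))) = (H (u, pt n (k+1)), d) := by
            refine Prod.ext ?_ hcoord
            rw [(T k).coe_fst hm, hL]
          rw [← this]
          exact ((T k).toPartialHomeomorph.left_inv hm).symm
        have ht1 : ((T k) (L t (pt n (k+1)))).2 = d := (seg k t ht).trans (ih t ht)
        have ht2 : ((T k) (L t₀ (pt n (k+1)))).2 = d := seg k t₀ ht₀N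
        have hrt := recon t ht ht1
        have hrt₀ := recon t₀ ht₀N ht2
        -- the transition map is constant on N
        set ψ : I → f ⁻¹' {H (x (k+1))} := fun u =>
          ((T (k+1)) ((T k).toPartialHomeomorph.symm (H (u, pt n (k+1)), d))).2 with hψ
        have hs1 : pt n (k+1) ∈ Icc (pt n k) (pt n (k+1)) :=
          ⟨pt_mono n (Nat.le_succ k), le_refl _⟩
        have hs2 : pt n (k+1) ∈ Icc (pt n (k+1)) (pt n (k+2)) :=
          ⟨le_refl _, pt_mono n (Nat.le_succ (k+1))⟩
        have htarget : ∀ u ∈ N, (H (u, pt n (k+1)), d) ∈ (T k).target :=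
          fun u hu => (T k).mem_target.2 (hx k u hu _ hs1)
        have hsource : ∀ u ∈ N,
            (T k).toPartialHomeomorph.symm (H (u, pt n (k+1)), d) ∈ (T (k+1)).source := by
          intro u hu
          refine (T (k+1)).mem_source.2 ?_
          rw [show f ((T k).toPartialHomeomorph.symm (H (u, pt n (k+1)), d)) = H (u, pt n (k+1)) from
            (T k).proj_symm_apply (htarget u hu)]
          exact hx (k+1) u hu _ hs2
        have hψcont : ContinuousOn ψ N := by
          have c1 : Continuous fun u : I => (H (u, pt n (k+1)), d) :=
            (H.continuous.comp (continuous_id.prodMk continuous_const)).prodMk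
              continuous_const
          have c2 : ContinuousOn (fun u : I =>
              (T k).toPartialHomeomorph.symm (H (u, pt n (k+1)), d)) N :=
            ((T k).toPartialHomeomorph.continuousOn_symm).comp c1.continuousOn
              (fun u hu => htarget u hu)
          exact (((T (k+1)).toPartialHomeomorph.continuousOn).comp c2
            (fun u hu => hsource u hu)).snd
        have hψconst : ψ t = ψ t₀ :=
          (hNpre.image ψ hψcont).subsingleton
            (Set.mem_image_of_mem _ ht) (Set.mem_image_of_mem _ ht₀N)
        rw [hrt, hrt₀]
        exact hψconst
    -- conclude equality of endpoints
    refine ⟨N, hNopen, ht₀N, fun t ht => ?_⟩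
    have h1top : (1 : I) ∈ Icc (pt n (n+1)) (pt n (n+2)) := by
      constructor
      · rw [pt_last]
      · rw [show pt n (n+2) = 1 from le_antisymm le_one'
          (by rw [← pt_last n]; exact pt_mono n (Nat.le_succ (n+1)))]
    have hm1 : L t 1 ∈ (T (n+1)).source := by
      exact hmem (n+1) t ht _ h1top
    have hm2 : L t₀ 1 ∈ (T (n+1)).source := by
      exact hmem (n+1) t₀ ht₀N _ h1top
    have hcoord : ((T (n+1)) (L t 1)).2 = ((T (n+1)) (L t₀ 1)).2 := by
      have := key (n+1) t ht
      rwa [pt_last] at this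
    have hbase : ((T (n+1)) (L t 1)).1 = ((T (n+1)) (L t₀ 1)).1 := by
      rw [(T (n+1)).coe_fst hm1, (T (n+1)).coe_fst hm2, hL, hL, Htgt, Htgt]
    exact (T (n+1)).toPartialHomeomorph.injOn hm1 hm2 (Prod.ext hbase hcoord)
  -- globalize: t ↦ L t 1 is constant
  have hclopen : IsClopen {t : I | L t 1 = L 0 1} := by
    constructor
    · rw [← isOpen_compl_iff]
      refine isOpen_iff_forall_mem_open.2 fun t₀ ht₀ => ?_
      obtain ⟨N, hNo, htN, hNc⟩ := loc t₀
      exact ⟨N, fun t ht hmem => ht₀ ((hNc t ht).symm.trans hmem), hNo, htN⟩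
    · refine isOpen_iff_forall_mem_open.2 fun t₀ ht₀ => ?_
      obtain ⟨N, hNo, htN, hNc⟩ := loc t₀
      exact ⟨N, fun t ht => by rw [Set.mem_setOf_eq, hNc t ht]; exact ht₀, hNo, htN⟩
  have huniv := hclopen.eq_univ ⟨0, rfl⟩
  have hL11 : L 1 1 = L 0 1 := by
    have : (1 : I) ∈ {t : I | L t 1 = L 0 1} := huniv ▸ Set.mem_univ _
    exact this
  -- identify δ₀ with L 0 and δ₁ with L 1
  have e₀ : ⇑δ₀ = ⇑(L 0) := by
    refine hf.eq_of_comp_eq δ₀.continuous (L 0).continuous (funext fun s => ?_) 0 (hL0 0).symm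
    simp only [Function.comp_apply]
    rw [h₀ s, hL 0 s, H.apply_zero]
    rfl
  have e₁ : ⇑δ₁ = ⇑(L 1) := by
    refine hf.eq_of_comp_eq δ₁.continuous (L 1).continuous (funext fun s => ?_) 0
      ((hL0 1).trans h00).symm
    simp only [Function.comp_apply]
    rw [h₁ s, hL 1 s, H.apply_one]
    rfl
  calc δ₀ 1 = L 0 1 := congrFun e₀ 1
    _ = L 1 1 := hL11.symm
    _ = δ₁ 1 := (congrFun e₁ 1).symm
end Monodromy

/-- For a covering map `f : E → B` and a point `b : B`, there is a group homomorphism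
from the fundamental group `π₁(B, b)` to the permutations of the fiber `f ⁻¹' {b}`
such that the class of a loop `γ` sends a point `v` of the fiber to the endpoint of
any lift of `γ` starting at `v`. Its image is the monodromy group of the cover. -/
theorem exists_monodromy_homomorphism {E B : Type*} [TopologicalSpace E]
    [TopologicalSpace B] (f : E → B) (hf : IsCoveringMap f) (b : B) :
    ∃ h : FundamentalGroup B b →* Equiv.Perm (f ⁻¹' {b}),
      ∀ (γ : Path b b) (v w : f ⁻¹' {b}) (δ : Path (v : E) (w : E)),
        (∀ s, f (δ s) = γ s) →
        h (@FundamentalGroup.fromPath (TopCat.of B) _ b ⟦γ⟧) v = w := by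
  classical
  have hfib : ∀ v : f ⁻¹' {b}, f (v : E) = b := fun v => v.2
  have hex : ∀ (γ : Path b b) (v : f ⁻¹' {b}),
      ∃ δ : C(I, E), δ 0 = (v : E) ∧ ∀ s, f (δ s) = γ s := by
    intro γ v
    obtain ⟨δ, hδ0, hδ⟩ := Monodromy.exists_lift hf γ.toContinuousMap v
      ((hfib v).trans γ.source.symm)
    exact ⟨δ, hδ0, fun s => hδ s⟩
  choose lft hlft0 hlft using hex
  have hend : ∀ γ v, f (lft γ v 1) = b := fun γ v => (hlft γ v 1).trans γ.target
  set ep : Path b b → (f ⁻¹' {b}) → (f ⁻¹' {b}) := fun γ v => ⟨lft γ v 1, hend γ v⟩ with hep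
  -- key: any lift of any homotopic loop computes ep
  have key : ∀ (γ γ' : Path b b), γ.Homotopic γ' → ∀ (v w : f ⁻¹' {b})
      (δ : Path (v : E) (w : E)), (∀ s, f (δ s) = γ s) → ep γ' v = w := by
    intro γ γ' hγγ' v w δ hδ
    have h1 : δ.toContinuousMap 0 = lft γ' v 0 := by
      rw [hlft0]; exact δ.source
    have h2 := Monodromy.endpoint_eq hf hγγ' δ.toContinuousMap (lft γ' v)
      (fun s => hδ s) (hlft γ' v) h1
    refine Subtype.ext ?_
    show lft γ' v 1 = (w : E)
    rw [← h2]
    exact δ.target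
  have ephom : ∀ γ γ' : Path b b, γ.Homotopic γ' → ep γ = ep γ' := by
    intro γ γ' h; funext v
    exact (key γ γ' h v (ep γ v) ⟨lft γ v, hlft0 γ v, rfl⟩ (hlft γ v)).symm
  have eptrans : ∀ (γ₁ γ₂ : Path b b) (v : f ⁻¹' {b}),
      ep (γ₁.trans γ₂) v = ep γ₂ (ep γ₁ v) := by
    intro γ₁ γ₂ v
    set δ₁ : Path (v : E) (ep γ₁ v : E) := ⟨lft γ₁ v, hlft0 γ₁ v, rfl⟩ with hδ₁
    set δ₂ : Path (ep γ₁ v : E) (ep γ₂ (ep γ₁ v) : E) :=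
      ⟨lft γ₂ (ep γ₁ v), hlft0 γ₂ (ep γ₁ v), rfl⟩ with hδ₂
    refine key (γ₁.trans γ₂) (γ₁.trans γ₂) (Path.Homotopic.refl _) v _ (δ₁.trans δ₂) ?_
    intro s
    rw [Path.trans_apply, Path.trans_apply]
    split_ifs with h
    · exact hlft γ₁ v _
    · exact hlft γ₂ (ep γ₁ v) _
  have epid : ∀ v : f ⁻¹' {b}, ep (Path.refl b) v = v := by
    intro v
    exact key (Path.refl b) (Path.refl b) (Path.Homotopic.refl _) v v
      (Path.refl (v : E)) (fun s => by simp [hfib v])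
  -- descend to the quotient
  set m : Path.Homotopic.Quotient b b → (f ⁻¹' {b}) → (f ⁻¹' {b}) :=
    Quotient.lift ep (fun γ γ' h => ephom γ γ' h) with hm
  have mmk : ∀ γ : Path b b, m ⟦γ⟧ = ep γ := fun γ => rfl
  have mcomp : ∀ (P Q : Path.Homotopic.Quotient b b) (v : f ⁻¹' {b}),
      m (P.trans Q) v = m Q (m P v) := by
    intro P Q v
    induction P using Quotient.inductionOn with
    | h γ₁ =>
      induction Q using Quotient.inductionOn with
      | h γ₂ =>
        show m ⟦γ₁.trans γ₂⟧ v = m ⟦γ₂⟧ (m ⟦γ₁⟧ v)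
        exact eptrans γ₁ γ₂ v
  have mid : ∀ v : f ⁻¹' {b}, m (CategoryTheory.CategoryStruct.id (FundamentalGroupoid.mk b)) v = v := by
    intro v
    rw [FundamentalGroupoid.id_eq_path_refl]
    exact epid v
  -- build the permutation
  set gmap : FundamentalGroup B b →
      Equiv.Perm (f ⁻¹' {b}) := fun p =>
    { toFun := m p
      invFun := m (p⁻¹ : FundamentalGroup B b)
      left_inv := fun v => by
        rw [← mcomp]
        rw [← FundamentalGroup.mul_def, inv_mul_cancel]
        exact epid v
      right_inv := fun v => by
        rw [← mcomp]
        rw [← FundamentalGroup.mul_def, mul_inv_cancel]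
        exact epid v } with hgmap
  refine ⟨MonoidHom.mk' gmap ?_, ?_⟩
  · intro p q
    refine Equiv.ext fun v => ?_
    show m (p * q) v = m p (m q v)
    rw [FundamentalGroup.mul_def, mcomp]
  · intro γ v w δ hδ
    show m ⟦γ⟧ v = w
    rw [mmk]
    exact key γ γ (Path.Homotopic.refl γ) v w δ hδ
end
end

section
/- In the combinatorial model of the 27 lines on a smooth cubic surface, for every pair of lines λ and μ that meet each other, there is exactly one line ν, distinct from λ and μ, that meets both λ and μ. (Equivalently, each line λ forms exactly five triangles with the ten lines that meet it.) -/
/-- The 27 lines on a smooth cubic surface, modeled combinatorially: the six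
exceptional lines `p̂ᵢ`, the fifteen proper transforms `ℓ̂_S` of lines through pairs
`S` of blown-up points, and the six proper transforms `Ĉᵢ` of conics through the
five points other than `pᵢ`. -/
abbrev CubicSurfaceLine : Type :=
  Fin 6 ⊕ ({S : Finset (Fin 6) // S.card = 2} ⊕ Fin 6)

/-- The incidence ("meets") relation among the 27 lines: `p̂ᵢ` meets `ℓ̂_S` iff `i ∈ S`;
`p̂ᵢ` meets `Ĉⱼ` iff `i ≠ j`; `ℓ̂_S` meets `ℓ̂_T` iff `S ∩ T = ∅`; `ℓ̂_S` meets `Ĉᵢ` iff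
`i ∈ S`; no two distinct `p̂`'s meet; no two distinct `Ĉ`'s meet; no line meets itself. -/
def meets : CubicSurfaceLine → CubicSurfaceLine → Prop
  | .inl _, .inl _ => False
  | .inl i, .inr (.inl S) => i ∈ S.1
  | .inl i, .inr (.inr j) => i ≠ j
  | .inr (.inl S), .inl i => i ∈ S.1
  | .inr (.inl S), .inr (.inl T) => S.1 ∩ T.1 = ∅
  | .inr (.inl S), .inr (.inr i) => i ∈ S.1
  | .inr (.inr i), .inl j => i ≠ j
  | .inr (.inr i), .inr (.inl S) => i ∈ S.1
  | .inr (.inr _), .inr (.inr _) => False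

instance : DecidableRel meets := fun a b =>
  match a, b with
  | .inl _, .inl _ => inferInstanceAs (Decidable False)
  | .inl i, .inr (.inl S) => inferInstanceAs (Decidable (i ∈ S.1))
  | .inl i, .inr (.inr j) => inferInstanceAs (Decidable (i ≠ j))
  | .inr (.inl S), .inl i => inferInstanceAs (Decidable (i ∈ S.1))
  | .inr (.inl S), .inr (.inl T) => inferInstanceAs (Decidable (S.1 ∩ T.1 = ∅))
  | .inr (.inl S), .inr (.inr i) => inferInstanceAs (Decidable (i ∈ S.1))
  | .inr (.inr i), .inl j => inferInstanceAs (Decidable (i ≠ j))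
  | .inr (.inr i), .inr (.inl S) => inferInstanceAs (Decidable (i ∈ S.1))
  | .inr (.inr _), .inr (.inr _) => inferInstanceAs (Decidable False)

theorem meets_symm : ∀ a b : CubicSurfaceLine, meets a b → meets b a := by
  rintro (i | S | i) (j | T | j) h <;>
    simp_all [meets, Finset.inter_comm, ne_comm]

theorem meets_irrefl : ∀ a : CubicSurfaceLine, ¬ meets a a := by decide

set_option synthInstance.maxSize 2000 in
set_option maxHeartbeats 4000000 in
/-- For every pair of lines `λ`, `μ` on a smooth cubic surface that meet, there is
exactly one further line `ν` meeting both `λ` and `μ` (so each line lies in exactly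
five triangles). -/
theorem unique_third_line_of_triangle (l m : CubicSurfaceLine) (h : meets l m) :
    ∃! n : CubicSurfaceLine, n ≠ l ∧ n ≠ m ∧ meets n l ∧ meets n m := by
  revert h; revert l m; simp only [ExistsUnique]; decide
end

section
/- In the combinatorial model of the 27 lines on a smooth cubic surface, the disjointness graph — the simple graph on the 27 lines whose edges join distinct lines that do not meet — is connected and has diameter at most two: any two distinct lines are either disjoint, or there exists a third line, distinct from both, that is disjoint from both. -/
/-- The disjointness graph on the 27 lines: distinct lines are adjacent iff they do
not meet. -/
def disjointnessGraph : SimpleGraph CubicSurfaceLine where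
  Adj l m := l ≠ m ∧ ¬ meets l m
  symm := ⟨fun l m h => ⟨h.1.symm, fun hm => h.2 (meets_symm m l hm)⟩⟩
  loopless := ⟨fun l h => h.1 rfl⟩


lemma key : ∀ l m : CubicSurfaceLine, l = m ∨ ¬ meets l m ∨
    ∃ n : CubicSurfaceLine, n ≠ l ∧ n ≠ m ∧ ¬ meets n l ∧ ¬ meets n m := by
  decide

/-- The disjointness graph on the 27 lines of a smooth cubic surface is connected
with diameter at most two: any two distinct lines are disjoint, or some third line
is disjoint from both. -/
theorem disjointnessGraph_connected_diameter_le_two :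
    disjointnessGraph.Connected ∧
      ∀ l m : CubicSurfaceLine, l ≠ m →
        disjointnessGraph.Adj l m ∨
          ∃ n : CubicSurfaceLine, n ≠ l ∧ n ≠ m ∧
            disjointnessGraph.Adj n l ∧ disjointnessGraph.Adj n m := by
  have hkey : ∀ l m : CubicSurfaceLine, l ≠ m →
      disjointnessGraph.Adj l m ∨
        ∃ n : CubicSurfaceLine, n ≠ l ∧ n ≠ m ∧
          disjointnessGraph.Adj n l ∧ disjointnessGraph.Adj n m := by
    intro l m hlm
    rcases key l m with h | h | ⟨n, h1, h2, h3, h4⟩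
    · exact absurd h hlm
    · exact Or.inl ⟨hlm, h⟩
    · exact Or.inr ⟨n, h1, h2, ⟨h1, h3⟩, ⟨h2, h4⟩⟩
  refine ⟨⟨fun l m => ?_⟩, hkey⟩
  by_cases h : l = m
  · exact h ▸ SimpleGraph.Reachable.refl l
  · rcases hkey l m h with hadj | ⟨n, _, _, h1, h2⟩
    · exact hadj.reachable
    · exact (h1.symm.reachable).trans h2.reachable
end
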